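/- Let p,q ≥ 1 and let ρ ∈ S_disc-nc(p,q). Let J be the union of two cycles of ρ, one contained in [p] and one contained in [p+1,p+q]. Let σ₁ be a permutation of J noncrossing on ρ|_J having a cycle that meets both of these cycles of ρ, and let σ₂ be a permutation of [p+q]∖J noncrossing on ρ|_{[p+q]∖J} whose orbit partition refines Π(ρ|_{[p+q]∖J}). Then the product σ := σ₁σ₂ belongs to S_ann-nc(p,q). -/

import Mathlib

namespace AnnNC

/-- The orbit ("same cycle") setoid of a permutation. -/
def orbitSetoid {α : Type*} (σ : Equiv.Perm α) : Setoid α :=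
  ⟨σ.SameCycle, ⟨fun x => Equiv.Perm.SameCycle.refl σ x,
    fun h => h.symm, fun h h' => h.trans h'⟩⟩

/-- Number of orbits (cycles, counting fixed points) of a permutation. -/
noncomputable def numOrbits {α : Type*} (σ : Equiv.Perm α) : ℕ :=
  Nat.card (Quotient (orbitSetoid σ))

/-- Number of blocks of the join `Π(σ) ∨ Π(ρ)` of the orbit partitions. -/
noncomputable def numJoin {α : Type*} (σ ρ : Equiv.Perm α) : ℕ :=
  Nat.card (Quotient (orbitSetoid σ ⊔ orbitSetoid ρ))

/-- Euler characteristic `χ_ρ(π) = #(ρ) + #(π) + #(π⁻¹ρ) − n`. -/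
noncomputable def euler {α : Type*} (ρ π : Equiv.Perm α) : ℤ :=
  (numOrbits ρ : ℤ) + (numOrbits π : ℤ) + (numOrbits (π⁻¹ * ρ) : ℤ) - (Nat.card α : ℤ)

/-- `π` is noncrossing on `ρ`. -/
def IsNoncrossingOn {α : Type*} (π ρ : Equiv.Perm α) : Prop :=
  euler ρ π = 2 * (numJoin π ρ : ℤ)

/-- Euler characteristic of permutations regarded as permutations of a subset `S`
(for permutations fixing the complement of `S` pointwise). -/
noncomputable def eulerOn {α : Type*} (S : Set α) (ρ π : Equiv.Perm α) : ℤ :=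
  ((numOrbits ρ : ℤ) - (Nat.card (Sᶜ : Set α) : ℤ)) +
    ((numOrbits π : ℤ) - (Nat.card (Sᶜ : Set α) : ℤ)) +
    ((numOrbits (π⁻¹ * ρ) : ℤ) - (Nat.card (Sᶜ : Set α) : ℤ)) - (Nat.card (S : Set α) : ℤ)

/-- `π` is noncrossing on `ρ`, both regarded as permutations of the subset `S`. -/
def IsNoncrossingWithin {α : Type*} (S : Set α) (π ρ : Equiv.Perm α) : Prop :=
  eulerOn S ρ π = 2 * ((numJoin π ρ : ℤ) - (Nat.card (Sᶜ : Set α) : ℤ))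

/-- `τ_{p,q} = (1,…,p)(p+1,…,p+q)` as a permutation of `Fin (p+q)`. -/
def tauPQ (p q : ℕ) : Equiv.Perm (Fin (p + q)) :=
  Equiv.permCongr finSumFinEquiv (Equiv.sumCongr (finRotate p) (finRotate q))

/-- Disc-noncrossing permutations: noncrossing on `τ_{p,q}` and the orbit partition
refines that of `τ_{p,q}`. -/
def SDiscNC (p q : ℕ) : Set (Equiv.Perm (Fin (p + q))) :=
  {π | IsNoncrossingOn π (tauPQ p q) ∧
    ∀ x y : Fin (p + q), π.SameCycle x y → ((x : ℕ) < p ↔ (y : ℕ) < p)}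

/-- Annular-noncrossing permutations: noncrossing on `τ_{p,q}` with at least one bridge. -/
def SAnnNC (p q : ℕ) : Set (Equiv.Perm (Fin (p + q))) :=
  {π | IsNoncrossingOn π (tauPQ p q) ∧
    ∃ a b : Fin (p + q), π.SameCycle a b ∧ (a : ℕ) < p ∧ p ≤ (b : ℕ)}

/-- The set of elements lying in bridges of `σ`. -/
def BridgeSet (p q : ℕ) (σ : Equiv.Perm (Fin (p + q))) : Set (Fin (p + q)) :=
  {x | ∃ a b : Fin (p + q), σ.SameCycle x a ∧ σ.SameCycle x b ∧ (a : ℕ) < p ∧ p ≤ (b : ℕ)}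

/-- `π₀` is the permutation induced by `π` on the partition `Π(τ_{p,q})`
(the first–return map of `π` to each of the two sides). -/
def IsPiZero (p q : ℕ) (π π₀ : Equiv.Perm (Fin (p + q))) : Prop :=
  ∀ a : Fin (p + q), ∃ k : ℕ, 0 < k ∧ π₀ a = (π ^ k) a ∧
    (((a : ℕ) < p) ↔ (((π ^ k) a : ℕ) < p)) ∧
    ∀ j : ℕ, 0 < j → j < k → ¬ (((a : ℕ) < p) ↔ (((π ^ j) a : ℕ) < p))

/-- The order `π ⪯ ρ` for (unhatted) permutations: the orbit partition of `π` refines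
that of `ρ` and `π` is noncrossing on `ρ`. -/
def permLe {α : Type*} (π ρ : Equiv.Perm α) : Prop :=
  (∀ x y : α, π.SameCycle x y → ρ.SameCycle x y) ∧ IsNoncrossingOn π ρ

/-- The order relation `π ⪯ ρ̂` in `S_nc-sd(p,q)`, i.e. `Kr(ρ) ⪯ Kr(π)`. -/
def leAnnHat (p q : ℕ) (π ρ : Equiv.Perm (Fin (p + q))) : Prop :=
  permLe (ρ⁻¹ * tauPQ p q) (π⁻¹ * tauPQ p q)

/-- `σ` is the permutation induced by `π` on the subset `J` (first-return map),
extended by the identity off `J`. -/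
def IsInducedOn {α : Type*} (π σ : Equiv.Perm α) (J : Set α) : Prop :=
  (∀ a ∉ J, σ a = a) ∧
  ∀ a ∈ J, ∃ k : ℕ, 0 < k ∧ σ a = (π ^ k) a ∧ (π ^ k) a ∈ J ∧
    ∀ j : ℕ, 0 < j → j < k → (π ^ j) a ∉ J

/-- The size of an orbit of a permutation. -/
noncomputable def orbitSize {α : Type*} (σ : Equiv.Perm α) (c : Quotient (orbitSetoid σ)) : ℕ :=
  Nat.card {x : α // Quotient.mk (orbitSetoid σ) x = c}

/-- `∏_{U ∈ Π(σ)} (−1)^{|U|−1} C_{|U|−1}`. -/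
noncomputable def catProd {α : Type*} (σ : Equiv.Perm α) : ℤ :=
  ∏ᶠ c : Quotient (orbitSetoid σ),
    ((-1 : ℤ) ^ (orbitSize σ c - 1) * (catalan (orbitSize σ c - 1) : ℤ))

/-- The carrier of the poset `S_nc-sd(p,q)`: pairs (permutation, hatted?). -/
def NCSDSet (p q : ℕ) : Set (Equiv.Perm (Fin (p + q)) × Bool) :=
  {z | (z.2 = false ∧ (z.1 ∈ SDiscNC p q ∪ SAnnNC p q)) ∨ (z.2 = true ∧ z.1 ∈ SDiscNC p q)}

/-- The partial order of `S_nc-sd(p,q)`. -/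
def ncsdLe (p q : ℕ) (a b : Equiv.Perm (Fin (p + q)) × Bool) : Prop :=
  (a.2 = false ∧ b.2 = false ∧ permLe a.1 b.1) ∨
  (b.2 = true ∧ permLe (b.1⁻¹ * tauPQ p q) (a.1⁻¹ * tauPQ p q))


open Equiv

set_option linter.unusedSectionVars false
set_option linter.unusedVariables false
set_option maxHeartbeats 1000000

section SetoidStuff
variable {α : Type*}

/-- The setoid `r` with the classes of `x` and `y` merged. -/
def merged (r : Setoid α) (x y : α) : Setoid α where
  r u w := r u w ∨ (r u x ∧ r y w) ∨ (r u y ∧ r x w)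
  iseqv := by
    refine ⟨fun u => Or.inl (r.refl u), ?_, ?_⟩
    · rintro u w (h | ⟨h1, h2⟩ | ⟨h1, h2⟩)
      · exact Or.inl (r.symm h)
      · exact Or.inr (Or.inr ⟨r.symm h2, r.symm h1⟩)
      · exact Or.inr (Or.inl ⟨r.symm h2, r.symm h1⟩)
    · rintro u w z (h | ⟨h1, h2⟩ | ⟨h1, h2⟩) (h' | ⟨h1', h2'⟩ | ⟨h1', h2'⟩)
      · exact Or.inl (r.trans h h')
      · exact Or.inr (Or.inl ⟨r.trans h h1', h2'⟩)
      · exact Or.inr (Or.inr ⟨r.trans h h1', h2'⟩)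
      · exact Or.inr (Or.inl ⟨h1, r.trans h2 h'⟩)
      · exact Or.inl (r.trans h1 (r.trans (r.symm (r.trans h2 h1')) h2'))
      · exact Or.inl (r.trans h1 h2')
      · exact Or.inr (Or.inr ⟨h1, r.trans h2 h'⟩)
      · exact Or.inl (r.trans h1 h2')
      · exact Or.inl (r.trans h1 (r.trans (r.symm (r.trans h2 h1')) h2'))

lemma merged_rel_def {r : Setoid α} {x y u w : α} :
    merged r x y u w ↔ (r u w ∨ (r u x ∧ r y w) ∨ (r u y ∧ r x w)) := Iff.rfl

/-- The "pair" setoid identifying only `x` and `y`. -/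
def pairS (x y : α) : Setoid α := merged ⊥ x y

lemma pairS_rel {x y u w : α} : pairS x y u w ↔ (u = w ∨ (u = x ∧ y = w) ∨ (u = y ∧ x = w)) :=
  Iff.rfl

lemma r_le_merged (r : Setoid α) (x y : α) : r ≤ merged r x y :=
  Setoid.le_def.2 fun h => Or.inl h

lemma pairS_le_merged (r : Setoid α) (x y : α) : pairS x y ≤ merged r x y := by
  rw [Setoid.le_def]
  rintro u w (rfl | ⟨rfl, rfl⟩ | ⟨rfl, rfl⟩)
  · exact Or.inl (r.refl u)
  · exact Or.inr (Or.inl ⟨r.refl _, r.refl _⟩)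
  · exact Or.inr (Or.inr ⟨r.refl _, r.refl _⟩)

lemma pairS_le_iff {r : Setoid α} {x y : α} : pairS x y ≤ r ↔ r x y := by
  constructor
  · intro h; exact Setoid.le_def.1 h (Or.inr (Or.inl ⟨rfl, rfl⟩))
  · intro h; rw [Setoid.le_def]
    rintro u w (rfl | ⟨rfl, rfl⟩ | ⟨rfl, rfl⟩)
    · exact r.refl u
    · exact h
    · exact r.symm h

lemma sup_pairS (r : Setoid α) (x y : α) : r ⊔ pairS x y = merged r x y := by
  apply le_antisymm
  · exact sup_le (r_le_merged r x y) (pairS_le_merged r x y)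
  · rw [Setoid.le_def]
    have hr : r ≤ r ⊔ pairS x y := le_sup_left
    have hp : pairS x y ≤ r ⊔ pairS x y := le_sup_right
    rintro u w (h | ⟨h1, h2⟩ | ⟨h1, h2⟩)
    · exact Setoid.le_def.1 hr h
    · exact (r ⊔ pairS x y).trans (Setoid.le_def.1 hr h1)
        ((r ⊔ pairS x y).trans (Setoid.le_def.1 hp (Or.inr (Or.inl ⟨rfl, rfl⟩)))
          (Setoid.le_def.1 hr h2))
    · exact (r ⊔ pairS x y).trans (Setoid.le_def.1 hr h1)
        ((r ⊔ pairS x y).trans (Setoid.le_def.1 hp (Or.inr (Or.inr ⟨rfl, rfl⟩)))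
          (Setoid.le_def.1 hr h2))

lemma merged_eq_of_rel {r : Setoid α} {x y : α} (h : r x y) : merged r x y = r := by
  apply Setoid.ext
  intro u w
  constructor
  · rintro (h' | ⟨h1, h2⟩ | ⟨h1, h2⟩)
    · exact h'
    · exact r.trans h1 (r.trans h h2)
    · exact r.trans h1 (r.trans (r.symm h) h2)
  · exact Or.inl

lemma card_quot_le_of_le [Finite α] {r s : Setoid α} (h : r ≤ s) :
    Nat.card (Quotient s) ≤ Nat.card (Quotient r) := by
  have : Function.Surjective (fun c : Quotient r => Quotient.map' id
      (fun a b hab => Setoid.le_def.1 h hab) c : Quotient r → Quotient s) := by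
    intro c
    induction c using Quotient.inductionOn with
    | _ u => exact ⟨Quotient.mk r u, rfl⟩
  exact Nat.card_le_card_of_surjective _ this

lemma card_quot_merged [Finite α] {r : Setoid α} {x y : α} (h : ¬ r x y) :
    Nat.card (Quotient r) = Nat.card (Quotient (merged r x y)) + 1 := by
  classical
  have key : Function.Bijective (fun c : Quotient r =>
      Quotient.lift (fun u => if r u x then (Sum.inr () : Quotient (merged r x y) ⊕ Unit)
        else Sum.inl (Quotient.mk (merged r x y) u))
      (by
        intro a b hab
        by_cases ha : r a x
        · have hb : r b x := r.trans (r.symm hab) ha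
          simp [ha, hb]
        · have hb : ¬ r b x := fun hb => ha (r.trans hab hb)
          simp only [ha, hb, if_false]
          exact congrArg _ (Quotient.sound (Or.inl hab))) c) := by
    constructor
    · intro c1 c2
      induction c1 using Quotient.inductionOn with
      | _ a =>
      induction c2 using Quotient.inductionOn with
      | _ b =>
      by_cases ha : r a x <;> by_cases hb : r b x <;> simp only [Quotient.lift_mk, ha, hb,
        if_true, if_false] <;> intro hab
      · exact Quotient.sound (r.trans ha (r.symm hb))
      · exact absurd hab (by simp)
      · exact absurd hab (by simp)
      · have := Quotient.exact (Sum.inl.inj hab)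
        rcases this with h' | ⟨h1, h2⟩ | ⟨h1, h2⟩
        · exact Quotient.sound h'
        · exact absurd h1 ha
        · exact absurd (r.symm h2) hb
    · rintro (c | c)
      · induction c using Quotient.inductionOn with
        | _ w =>
        by_cases hw : r w x
        · refine ⟨Quotient.mk r y, ?_⟩
          have hy : ¬ r y x := fun hy => h (r.symm hy)
          simp only [Quotient.lift_mk, hy, if_false]
          refine congrArg _ (Quotient.sound ?_)
          exact Or.inr (Or.inr ⟨r.refl y, r.symm hw⟩)
        · exact ⟨Quotient.mk r w, by simp only [Quotient.lift_mk, if_neg hw]⟩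
      · obtain ⟨⟩ := c
        exact ⟨Quotient.mk r x, by exact if_pos (r.refl x)⟩
  have := Nat.card_eq_of_bijective _ key
  rw [this, Nat.card_sum]
  simp

lemma card_quot_sup_pairS_ge [Finite α] (r : Setoid α) (x y : α) :
    Nat.card (Quotient r) ≤ Nat.card (Quotient (r ⊔ pairS x y)) + 1 := by
  by_cases h : r x y
  · have : r ⊔ pairS x y = r := sup_eq_left.2 (pairS_le_iff.2 h)
    rw [this]; omega
  · rw [sup_pairS, ← card_quot_merged h]

end SetoidStuff

section PermStuff
variable {α : Type*} [DecidableEq α] [Fintype α]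

lemma sameCycle_of_pow {σ : Perm α} {x y : α} {k : ℕ} (h : (σ ^ k) x = y) :
    σ.SameCycle x y := ⟨k, by exact_mod_cast h⟩

lemma exists_pow_of_sameCycle {σ : Perm α} {x y : α} (h : σ.SameCycle x y) :
    ∃ k : ℕ, (σ ^ k) x = y := by
  obtain ⟨i, _, _, h⟩ := h.exists_pow_eq σ
  exact ⟨i, h⟩

lemma pow_succ_apply (σ : Perm α) (k : ℕ) (x : α) : (σ ^ (k+1)) x = σ ((σ ^ k) x) := by
  rw [pow_succ']; rfl

lemma sameCycle_apply_self (σ : Perm α) (u : α) : σ.SameCycle u (σ u) :=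
  sameCycle_of_pow (k := 1) (by simp)

lemma rel_of_step (R : Setoid α) (σ : Perm α) (h : ∀ u, R u (σ u)) {x y : α}
    (hxy : σ.SameCycle x y) : R x y := by
  obtain ⟨k, hk⟩ := exists_pow_of_sameCycle hxy
  have aux : ∀ k : ℕ, R x ((σ ^ k) x) := by
    intro k
    induction k with
    | zero => exact R.refl x
    | succ k ih =>
        rw [pow_succ_apply]
        exact R.trans ih (h _)
  rw [← hk]
  exact aux k

lemma orbitSetoid_rel {σ : Perm α} {x y : α} : orbitSetoid σ x y ↔ σ.SameCycle x y := Iff.rfl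

lemma orbitSetoid_inv (σ : Perm α) : orbitSetoid σ⁻¹ = orbitSetoid σ :=
  Setoid.ext fun _ _ => Perm.sameCycle_inv

lemma numOrbits_inv (σ : Perm α) : numOrbits σ⁻¹ = numOrbits σ := by
  unfold numOrbits; rw [orbitSetoid_inv]

lemma pairS_rel_swap (x y v : α) : pairS x y v (swap x y v) := by
  rcases eq_or_ne v x with rfl | hvx
  · exact pairS_rel.2 (Or.inr (Or.inl ⟨rfl, (swap_apply_left v y).symm⟩))
  · rcases eq_or_ne v y with rfl | hvy
    · exact pairS_rel.2 (Or.inr (Or.inr ⟨rfl, (swap_apply_right x v).symm⟩))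
    · exact pairS_rel.2 (Or.inl (swap_apply_of_ne_of_ne hvx hvy).symm)

lemma orbit_swap_mul_le (σ : Perm α) (x y : α) :
    orbitSetoid (swap x y * σ) ≤ orbitSetoid σ ⊔ pairS x y := by
  rw [Setoid.le_def]
  intro u w huw
  refine rel_of_step _ _ (fun v => ?_) huw
  have h1 : (orbitSetoid σ ⊔ pairS x y) v (σ v) :=
    Setoid.le_def.1 le_sup_left (sameCycle_apply_self σ v)
  have h2 : (orbitSetoid σ ⊔ pairS x y) (σ v) (swap x y (σ v)) :=
    Setoid.le_def.1 le_sup_right (pairS_rel_swap x y (σ v))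
  have h3 : (swap x y * σ) v = swap x y (σ v) := Perm.mul_apply _ _ _
  rw [h3]
  exact (orbitSetoid σ ⊔ pairS x y).trans h1 h2

lemma orbit_le_swap_sup (σ : Perm α) (x y : α) :
    orbitSetoid σ ≤ orbitSetoid (swap x y * σ) ⊔ pairS x y := by
  have := orbit_swap_mul_le (swap x y * σ) x y
  rwa [swap_mul_self_mul] at this

lemma orbitSup_swap (σ : Perm α) (x y : α) :
    orbitSetoid (swap x y * σ) ⊔ pairS x y = orbitSetoid σ ⊔ pairS x y := by
  apply le_antisymm
  · exact sup_le (orbit_swap_mul_le σ x y) le_sup_right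
  · exact sup_le (orbit_le_swap_sup σ x y) le_sup_right

lemma numOrbits_swap_mul_le (σ : Perm α) (x y : α) :
    numOrbits (swap x y * σ) ≤ numOrbits σ + 1 := by
  calc numOrbits (swap x y * σ)
      ≤ Nat.card (Quotient (orbitSetoid (swap x y * σ) ⊔ pairS x y)) + 1 :=
        card_quot_sup_pairS_ge _ x y
    _ = Nat.card (Quotient (orbitSetoid σ ⊔ pairS x y)) + 1 := by rw [orbitSup_swap]
    _ ≤ numOrbits σ + 1 := Nat.add_le_add_right (card_quot_le_of_le le_sup_left) 1

lemma numOrbits_le_swap_mul (σ : Perm α) (x y : α) :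
    numOrbits σ ≤ numOrbits (swap x y * σ) + 1 := by
  calc numOrbits σ
      ≤ Nat.card (Quotient (orbitSetoid σ ⊔ pairS x y)) + 1 := card_quot_sup_pairS_ge _ x y
    _ = Nat.card (Quotient (orbitSetoid (swap x y * σ) ⊔ pairS x y)) + 1 := by
        rw [orbitSup_swap]
    _ ≤ numOrbits (swap x y * σ) + 1 := Nat.add_le_add_right (card_quot_le_of_le le_sup_left) 1

lemma sameCycle_swap_mul_of_not {σ : Perm α} {x y : α} (h : ¬ σ.SameCycle x y) :
    (swap x y * σ).SameCycle y x := by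
  have hP : ∃ k : ℕ, (σ ^ (k+1)) y = y := by
    refine ⟨orderOf σ - 1, ?_⟩
    have h1 : 1 ≤ orderOf σ := orderOf_pos σ
    rw [Nat.sub_add_cancel h1, pow_orderOf_eq_one]; rfl
  classical
  set m := Nat.find hP with hm
  have hspec : (σ ^ (m+1)) y = y := Nat.find_spec hP
  have hmin : ∀ j, j < m → (σ ^ (j+1)) y ≠ y := fun j hj => Nat.find_min hP hj
  have aux : ∀ j, j ≤ m → ((swap x y * σ) ^ j) y = (σ ^ j) y := by
    intro j
    induction j with
    | zero => intro _; rfl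
    | succ j ih =>
        intro hj
        rw [pow_succ_apply, ih (le_of_lt hj), Perm.mul_apply, ← pow_succ_apply]
        have hne1 : (σ ^ (j+1)) y ≠ x := by
          intro hx
          exact h ((sameCycle_of_pow hx).symm)
        have hne2 : (σ ^ (j+1)) y ≠ y := hmin j hj
        exact swap_apply_of_ne_of_ne hne1 hne2
  have final : ((swap x y * σ) ^ (m+1)) y = x := by
    rw [pow_succ_apply, aux m le_rfl, Perm.mul_apply, ← pow_succ_apply, hspec,
      swap_apply_right]
  exact sameCycle_of_pow final

lemma numOrbits_swap_mul_of_not {σ : Perm α} {x y : α} (h : ¬ σ.SameCycle x y) :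
    numOrbits (swap x y * σ) + 1 = numOrbits σ := by
  have hsc : (swap x y * σ).SameCycle x y := (sameCycle_swap_mul_of_not h).symm
  have h1 : orbitSetoid (swap x y * σ) ⊔ pairS x y = orbitSetoid (swap x y * σ) :=
    sup_eq_left.2 (pairS_le_iff.2 hsc)
  have h2 : orbitSetoid (swap x y * σ) = merged (orbitSetoid σ) x y := by
    rw [← h1, orbitSup_swap, sup_pairS]
  have h3 := card_quot_merged (r := orbitSetoid σ) (x := x) (y := y) h
  unfold numOrbits
  rw [h2, h3]

lemma not_sameCycle_of_fixed {π : Perm α} {x w : α} (hfix : π x = x) (hw : w ≠ x) :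
    ¬ π.SameCycle x w := by
  intro hsc
  obtain ⟨k, hk⟩ := exists_pow_of_sameCycle hsc
  have : ∀ j : ℕ, (π ^ j) x = x := by
    intro j
    induction j with
    | zero => rfl
    | succ j ih => rw [pow_succ_apply, ih, hfix]
  exact hw ((hk ▸ this k).symm ▸ rfl)

lemma numOrbits_swap_mul_apply {σ : Perm α} {x : α} (hx : σ x ≠ x) :
    numOrbits (swap x (σ x) * σ) = numOrbits σ + 1 := by
  have hfix : (swap x (σ x) * σ) x = x := by
    rw [Perm.mul_apply, swap_apply_right]
  have hnsc : ¬ (swap x (σ x) * σ).SameCycle x (σ x) :=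
    not_sameCycle_of_fixed hfix hx
  have := numOrbits_swap_mul_of_not hnsc
  rw [swap_mul_self_mul] at this
  omega

lemma numOrbits_le_card (σ : Perm α) : numOrbits σ ≤ Nat.card α :=
  Nat.card_le_card_of_surjective (Quotient.mk (orbitSetoid σ))
    (fun c => Quotient.inductionOn c fun u => ⟨u, rfl⟩)

lemma eq_one_of_card_le {σ : Perm α} (h : Nat.card α ≤ numOrbits σ) : σ = 1 := by
  have hsurj : Function.Surjective (Quotient.mk (orbitSetoid σ)) :=
    fun c => Quotient.inductionOn c fun u => ⟨u, rfl⟩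
  have hcard : Nat.card α = Nat.card (Quotient (orbitSetoid σ)) :=
    le_antisymm h (numOrbits_le_card σ)
  have hbij : Function.Bijective (Quotient.mk (orbitSetoid σ)) :=
    (Nat.bijective_iff_surjective_and_card _).2 ⟨hsurj, hcard⟩
  ext u
  have : Quotient.mk (orbitSetoid σ) u = Quotient.mk (orbitSetoid σ) (σ u) :=
    Quotient.sound (sameCycle_apply_self σ u)
  simpa using (hbij.1 this).symm

lemma numOrbits_one : numOrbits (1 : Perm α) = Nat.card α := by
  refine (Nat.card_eq_of_bijective (Quotient.mk (orbitSetoid (1 : Perm α))) ⟨?_, ?_⟩).symm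
  · intro a b hab
    obtain ⟨i, hi⟩ := Quotient.exact hab
    simpa using hi
  · exact fun c => Quotient.inductionOn c fun u => ⟨u, rfl⟩

lemma orbitSetoid_one : orbitSetoid (1 : Perm α) = (⊥ : Setoid α) := by
  apply Setoid.ext
  intro x y
  constructor
  · rintro ⟨i, hi⟩
    simpa using hi
  · rintro h
    cases h
    exact Setoid.refl' _ x

lemma swap_decomp (σ : Perm α) : ∃ l : List (Perm α),
    (∀ t ∈ l, ∃ x y, x ≠ y ∧ t = swap x y) ∧ l.prod = σ ∧
      l.length + numOrbits σ = Nat.card α := by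
  suffices aux : ∀ k (σ : Perm α), Nat.card α ≤ numOrbits σ + k → ∃ l : List (Perm α),
      (∀ t ∈ l, ∃ x y, x ≠ y ∧ t = swap x y) ∧ l.prod = σ ∧
        l.length + numOrbits σ = Nat.card α by
    exact aux (Nat.card α) σ (by omega)
  intro k
  induction k with
  | zero =>
      intro σ hσ
      have : σ = 1 := eq_one_of_card_le (by omega)
      subst this
      exact ⟨[], by simp, by simp, by simp [numOrbits_one]⟩
  | succ k ih =>
      intro σ hσ
      by_cases h1 : σ = 1
      · subst h1
        exact ⟨[], by simp, by simp, by simp [numOrbits_one]⟩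
      · have : ∃ x, σ x ≠ x := by
          by_contra hc
          push_neg at hc
          exact h1 (Equiv.ext hc)
        obtain ⟨x, hx⟩ := this
        have hσ' := numOrbits_swap_mul_apply hx
        obtain ⟨l, hl, hp, hlen⟩ := ih (swap x (σ x) * σ) (by omega)
        refine ⟨swap x (σ x) :: l, ?_, ?_, ?_⟩
        · rintro t ht
          rcases List.mem_cons.1 ht with rfl | ht'
          · exact ⟨x, σ x, Ne.symm hx, rfl⟩
          · exact hl t ht'
        · rw [List.prod_cons, hp, swap_mul_self_mul]
        · simp only [List.length_cons]
          omega

lemma numOrbits_list_swap_mul (l : List (Perm α)) (hl : ∀ t ∈ l, ∃ x y, x ≠ y ∧ t = swap x y) :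
    ∀ C : Perm α, numOrbits C ≤ numOrbits (l.prod * C) + l.length := by
  induction l with
  | nil => intro C; simp
  | cons t l ih =>
      intro C
      obtain ⟨x, y, _, rfl⟩ := hl t List.mem_cons_self
      have h1 := ih (fun t ht => hl t (List.mem_cons_of_mem _ ht)) C
      have h2 := numOrbits_le_swap_mul (l.prod * C) x y
      rw [List.prod_cons, mul_assoc]
      simp only [List.length_cons]
      omega

/-- Subadditivity: `#A + #B ≤ #(A*B) + n`. -/
lemma numOrbits_mul_ge (A B : Perm α) :
    numOrbits A + numOrbits B ≤ numOrbits (A * B) + Nat.card α := by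
  obtain ⟨l, hl, hp, hlen⟩ := swap_decomp A
  have := numOrbits_list_swap_mul l hl B
  rw [hp] at this
  omega

lemma prod_le_join (A B : Perm α) :
    orbitSetoid (A * B) ≤ orbitSetoid A ⊔ orbitSetoid B := by
  rw [Setoid.le_def]
  intro u w huw
  refine rel_of_step _ _ (fun v => ?_) huw
  have h1 : (orbitSetoid A ⊔ orbitSetoid B) v (B v) :=
    Setoid.le_def.1 le_sup_right (sameCycle_apply_self B v)
  have h2 : (orbitSetoid A ⊔ orbitSetoid B) (B v) (A (B v)) :=
    Setoid.le_def.1 le_sup_left (sameCycle_apply_self A (B v))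
  have h3 : (A * B) v = A (B v) := Perm.mul_apply _ _ _
  rw [h3]
  exact (orbitSetoid A ⊔ orbitSetoid B).trans h1 h2

lemma orbit_swap_apply_le {A : Perm α} {x : α} (hx : A x ≠ x) :
    orbitSetoid (swap x (A x) * A) ≤ orbitSetoid A := by
  rw [Setoid.le_def]
  intro u w huw
  refine rel_of_step _ _ (fun v => ?_) huw
  have h3 : (swap x (A x) * A) v = swap x (A x) (A v) := Perm.mul_apply _ _ _
  rw [h3]
  by_cases h1 : A v = x
  · rw [h1, swap_apply_left]
    refine sameCycle_of_pow (k := 2) ?_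
    rw [pow_two, Perm.mul_apply, h1]
  · by_cases h2 : A v = A x
    · have hveq : v = x := A.injective h2
      have h4 : swap x (A x) (A v) = v := by
        rw [h2, swap_apply_right]; exact hveq.symm
      rw [h4]
    · rw [swap_apply_of_ne_of_ne h1 h2]
      exact sameCycle_apply_self A v

/-- Genus inequality for a pair: `#A + #B + #(AB) ≤ n + 2·#(Π(A)∨Π(B))`. -/
theorem genus_pair (A B : Perm α) :
    numOrbits A + numOrbits B + numOrbits (A * B) ≤ Nat.card α + 2 * numJoin A B := by
  suffices aux : ∀ k (A B : Perm α), Nat.card α ≤ numOrbits A + k →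
      numOrbits A + numOrbits B + numOrbits (A * B) ≤ Nat.card α + 2 * numJoin A B by
    exact aux (Nat.card α) A B (by omega)
  intro k
  induction k with
  | zero =>
      intro A B hA
      have : A = 1 := eq_one_of_card_le (by omega)
      subst this
      have hJ : numJoin 1 B = numOrbits B := by
        unfold numJoin numOrbits
        rw [orbitSetoid_one, bot_sup_eq]
      rw [hJ, numOrbits_one, one_mul]
      omega
  | succ k ih =>
      intro A B hA
      by_cases h1 : A = 1
      · subst h1
        have hJ : numJoin 1 B = numOrbits B := by
          unfold numJoin numOrbits
          rw [orbitSetoid_one, bot_sup_eq]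
        rw [hJ, numOrbits_one, one_mul]
        omega
      · have : ∃ x, A x ≠ x := by
          by_contra hc
          push_neg at hc
          exact h1 (Equiv.ext hc)
        obtain ⟨x, hx⟩ := this
        set y := A x with hy
        set A' := swap x y * A with hA'def
        have hA1 : numOrbits A' = numOrbits A + 1 := numOrbits_swap_mul_apply hx
        have ihs := ih A' B (by omega)
        have hAA' : A * B = swap x y * (A' * B) := by
          rw [hA'def, ← mul_assoc, swap_mul_self_mul]
        -- join facts
        have hrefine : orbitSetoid A' ≤ orbitSetoid A := orbit_swap_apply_le hx
        have hJnewle : orbitSetoid A' ⊔ orbitSetoid B ≤ orbitSetoid A ⊔ orbitSetoid B :=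
          sup_le_sup_right hrefine _
        have hfact2 : orbitSetoid A ⊔ orbitSetoid B ≤
            (orbitSetoid A' ⊔ orbitSetoid B) ⊔ pairS x y := by
          apply sup_le
          · exact le_trans (orbit_le_swap_sup A x y) (sup_le_sup_right le_sup_left _)
          · exact le_trans le_sup_right le_sup_left
        by_cases hc : (A' * B).SameCycle x y
        · have hub : numOrbits (A * B) ≤ numOrbits (A' * B) + 1 := by
            rw [hAA']
            exact numOrbits_swap_mul_le _ x y
          have hpair : pairS x y ≤ orbitSetoid A' ⊔ orbitSetoid B :=
            pairS_le_iff.2 (Setoid.le_def.1 (prod_le_join A' B) hc)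
          have hJle : orbitSetoid A ⊔ orbitSetoid B ≤ orbitSetoid A' ⊔ orbitSetoid B := by
            refine le_trans hfact2 ?_
            exact sup_le le_rfl hpair
          have hcc : numJoin A' B ≤ numJoin A B := card_quot_le_of_le hJle
          omega
        · have hxy : x ≠ y := fun h => hx h.symm
          have heq : numOrbits (A * B) + 1 = numOrbits (A' * B) := by
            rw [hAA']
            exact numOrbits_swap_mul_of_not hc
          have hc1 : Nat.card (Quotient ((orbitSetoid A' ⊔ orbitSetoid B) ⊔ pairS x y)) ≤
              numJoin A B := card_quot_le_of_le hfact2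
          have hc2 := card_quot_sup_pairS_ge (orbitSetoid A' ⊔ orbitSetoid B) x y
          have e1 : numJoin A' B = Nat.card (Quotient (orbitSetoid A' ⊔ orbitSetoid B)) := rfl
          omega

end PermStuff

section TransferStuff
variable {α : Type*} [DecidableEq α] [Fintype α]

/-- If `π` maps `T` into itself and agrees with `π'` on `T`, powers agree on `T`. -/
lemma pow_congr_on {T : Set α} {π π' : Perm α} (hinv : ∀ z ∈ T, π z ∈ T)
    (hag : ∀ z ∈ T, π z = π' z) {x : α} (hx : x ∈ T) (k : ℕ) :
    (π ^ k) x ∈ T ∧ (π' ^ k) x = (π ^ k) x := by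
  induction k with
  | zero => exact ⟨hx, rfl⟩
  | succ k ih =>
      obtain ⟨h1, h2⟩ := ih
      constructor
      · rw [pow_succ_apply]; exact hinv _ h1
      · rw [pow_succ_apply, pow_succ_apply, h2, hag _ h1]

lemma sameCycle_congr_on {T : Set α} {π π' : Perm α} (hinv : ∀ z ∈ T, π z ∈ T)
    (hag : ∀ z ∈ T, π z = π' z) {x y : α} (hx : x ∈ T) (h : π.SameCycle x y) :
    π'.SameCycle x y := by
  obtain ⟨k, hk⟩ := exists_pow_of_sameCycle h
  exact sameCycle_of_pow ((pow_congr_on hinv hag hx k).2.trans hk)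

lemma sameCycle_mem_of_inv {T : Set α} {π : Perm α} (hinv : ∀ z ∈ T, π z ∈ T) {x y : α}
    (hx : x ∈ T) (h : π.SameCycle x y) : y ∈ T := by
  obtain ⟨k, hk⟩ := exists_pow_of_sameCycle h
  have := (pow_congr_on hinv (fun z _ => rfl) hx k).1
  rwa [hk] at this

/-- A permutation fixing `Sᶜ` pointwise maps `S` into `S`. -/
lemma mapsTo_of_fixes_compl {S : Set α} {A : Perm α} (h : ∀ x ∉ S, A x = x) :
    ∀ x ∈ S, A x ∈ S := by
  intro x hx
  by_contra hAx
  have h2 : A (A x) = A x := h _ hAx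
  have := A.injective h2
  rw [this] at hAx
  exact hAx hx

/-- A permutation fixing `S` pointwise maps `Sᶜ` into `Sᶜ`. -/
lemma mapsTo_compl_of_fixes {S : Set α} {B : Perm α} (h : ∀ x ∈ S, B x = x) :
    ∀ x ∉ S, B x ∉ S := by
  intro x hx hBx
  have h2 : B (B x) = B x := h _ hBx
  have := B.injective h2
  rw [this] at hBx
  exact hx hBx

lemma fixes_pow {π : Perm α} {x : α} (h : π x = x) (k : ℕ) : (π ^ k) x = x := by
  induction k with
  | zero => rfl
  | succ k ih => rw [pow_succ_apply, ih, h]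

lemma sameCycle_eq_of_fixed {π : Perm α} {x y : α} (h : π x = x) (hsc : π.SameCycle x y) :
    y = x := by
  obtain ⟨k, hk⟩ := exists_pow_of_sameCycle hsc
  rw [← hk, fixes_pow h]

lemma inv_fixes {π : Perm α} {x : α} (h : π x = x) : π⁻¹ x = x := by
  conv_lhs => rw [← h]
  exact π.symm_apply_apply x

section DisjointProd
variable {S : Set α} {A B : Perm α}
  (hA : ∀ x ∉ S, A x = x) (hB : ∀ x ∈ S, B x = x)

include hA hB

lemma prod_pow_on (u : α) (hu : u ∈ S) (k : ℕ) :
    ((A * B) ^ k) u = (A ^ k) u ∧ (A ^ k) u ∈ S := by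
  induction k with
  | zero => exact ⟨rfl, hu⟩
  | succ k ih =>
      obtain ⟨h1, h2⟩ := ih
      have hBfix : B ((A ^ k) u) = (A ^ k) u := hB _ h2
      constructor
      · rw [pow_succ_apply, pow_succ_apply, h1, Perm.mul_apply, hBfix]
      · rw [pow_succ_apply]; exact mapsTo_of_fixes_compl hA _ h2

lemma prod_pow_off (u : α) (hu : u ∉ S) (k : ℕ) :
    ((A * B) ^ k) u = (B ^ k) u ∧ (B ^ k) u ∉ S := by
  induction k with
  | zero => exact ⟨rfl, hu⟩
  | succ k ih =>
      obtain ⟨h1, h2⟩ := ih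
      have hAfix : A (B ((B ^ k) u)) = B ((B ^ k) u) := hA _ (mapsTo_compl_of_fixes hB _ h2)
      constructor
      · rw [pow_succ_apply, pow_succ_apply, h1, Perm.mul_apply, hAfix]
      · rw [pow_succ_apply]; exact mapsTo_compl_of_fixes hB _ h2

lemma prod_sameCycle_on {u w : α} (hu : u ∈ S) :
    (A * B).SameCycle u w ↔ A.SameCycle u w := by
  constructor
  · intro h
    obtain ⟨k, hk⟩ := exists_pow_of_sameCycle h
    exact sameCycle_of_pow (((prod_pow_on hA hB u hu k).1).symm.trans hk)
  · intro h
    obtain ⟨k, hk⟩ := exists_pow_of_sameCycle h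
    exact sameCycle_of_pow (((prod_pow_on hA hB u hu k).1).trans hk)

lemma prod_sameCycle_off {u w : α} (hu : u ∉ S) :
    (A * B).SameCycle u w ↔ B.SameCycle u w := by
  constructor
  · intro h
    obtain ⟨k, hk⟩ := exists_pow_of_sameCycle h
    exact sameCycle_of_pow (((prod_pow_off hA hB u hu k).1).symm.trans hk)
  · intro h
    obtain ⟨k, hk⟩ := exists_pow_of_sameCycle h
    exact sameCycle_of_pow (((prod_pow_off hA hB u hu k).1).trans hk)

/-- Orbit count of a product of permutations with "disjoint supports". -/
lemma numOrbits_disjoint_prod :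
    numOrbits (A * B) + Nat.card α = numOrbits A + numOrbits B := by
  classical
  have wd1 : ∀ (a b : α), orbitSetoid A a b →
      (if a ∈ S then (Sum.inl (Quotient.mk (orbitSetoid (A * B)) a) :
        Quotient (orbitSetoid (A * B)) ⊕ α) else Sum.inr a) =
      (if b ∈ S then Sum.inl (Quotient.mk (orbitSetoid (A * B)) b) else Sum.inr b) := by
    intro a b hab
    by_cases ha : a ∈ S
    · have hb : b ∈ S := sameCycle_mem_of_inv (mapsTo_of_fixes_compl hA) ha hab
      rw [if_pos ha, if_pos hb]
      exact congrArg _ (Quotient.sound ((prod_sameCycle_on hA hB ha).2 hab))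
    · have hba : b = a := sameCycle_eq_of_fixed (hA _ ha) hab
      subst hba; rfl
  have wd2 : ∀ (a b : α), orbitSetoid B a b →
      (if a ∉ S then (Sum.inl (Quotient.mk (orbitSetoid (A * B)) a) :
        Quotient (orbitSetoid (A * B)) ⊕ α) else Sum.inr a) =
      (if b ∉ S then Sum.inl (Quotient.mk (orbitSetoid (A * B)) b) else Sum.inr b) := by
    intro a b hab
    by_cases ha : a ∈ S
    · have hba : b = a := sameCycle_eq_of_fixed (hB _ ha) hab
      subst hba; rfl
    · have hb : b ∉ S := sameCycle_mem_of_inv (T := {z | z ∉ S})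
        (fun z hz => mapsTo_compl_of_fixes hB _ hz) ha hab
      rw [if_pos ha, if_pos hb]
      exact congrArg _ (Quotient.sound ((prod_sameCycle_off hA hB ha).2 hab))
  set F : Quotient (orbitSetoid A) ⊕ Quotient (orbitSetoid B) →
      Quotient (orbitSetoid (A * B)) ⊕ α :=
    Sum.elim (Quotient.lift _ wd1) (Quotient.lift _ wd2) with hF
  have hmapS : ∀ z ∈ S, (A * B) z ∈ S := fun z hz => by
    rw [Perm.mul_apply, hB _ hz]
    exact mapsTo_of_fixes_compl hA _ hz
  have hmapSc : ∀ z ∈ ({z | z ∉ S} : Set α), (A * B) z ∈ ({z | z ∉ S} : Set α) := by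
    intro z hz
    rw [Set.mem_setOf_eq] at hz ⊢
    rw [Perm.mul_apply]
    have h1 : B z ∉ S := mapsTo_compl_of_fixes hB _ hz
    rw [hA _ h1]
    exact h1
  have hbij : Function.Bijective F := by
    constructor
    · rintro (c1 | c1) (c2 | c2) h
      · revert h
        refine Quotient.inductionOn₂ c1 c2 fun a b h => ?_
        simp only [hF, Sum.elim_inl, Quotient.lift_mk] at h
        by_cases ha : a ∈ S <;> by_cases hb : b ∈ S
        · rw [if_pos ha, if_pos hb] at h
          exact congrArg Sum.inl (Quotient.sound ((prod_sameCycle_on hA hB ha).1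
            (Quotient.exact (Sum.inl.inj h))))
        · rw [if_pos ha, if_neg hb] at h; exact absurd h (by simp)
        · rw [if_neg ha, if_pos hb] at h; exact absurd h (by simp)
        · rw [if_neg ha, if_neg hb] at h
          obtain rfl : a = b := Sum.inr.inj h
          rfl
      · revert h
        refine Quotient.inductionOn₂ c1 c2 fun a b h => ?_
        simp only [hF, Sum.elim_inl, Sum.elim_inr, Quotient.lift_mk] at h
        exfalso
        by_cases ha : a ∈ S <;> by_cases hb : b ∈ S
        · rw [if_pos ha, if_neg (by simpa using hb)] at h; exact absurd h (by simp)
        · rw [if_pos ha, if_pos hb] at h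
          have hsc : (A * B).SameCycle a b := Quotient.exact (Sum.inl.inj h)
          exact hb (sameCycle_mem_of_inv hmapS ha hsc)
        · rw [if_neg ha, if_neg (by simpa using hb)] at h
          obtain rfl : a = b := Sum.inr.inj h
          exact ha hb
        · rw [if_neg ha, if_pos hb] at h; exact absurd h (by simp)
      · revert h
        refine Quotient.inductionOn₂ c1 c2 fun a b h => ?_
        simp only [hF, Sum.elim_inl, Sum.elim_inr, Quotient.lift_mk] at h
        exfalso
        by_cases ha : a ∈ S <;> by_cases hb : b ∈ S
        · rw [if_neg (by simpa using ha), if_pos hb] at h; exact absurd h (by simp)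
        · rw [if_neg (by simpa using ha), if_neg hb] at h
          obtain rfl : a = b := Sum.inr.inj h
          exact hb ha
        · rw [if_pos ha, if_pos hb] at h
          have hsc : (A * B).SameCycle a b := Quotient.exact (Sum.inl.inj h)
          exact (sameCycle_mem_of_inv hmapSc ha hsc) hb
        · rw [if_pos ha, if_neg hb] at h; exact absurd h (by simp)
      · revert h
        refine Quotient.inductionOn₂ c1 c2 fun a b h => ?_
        simp only [hF, Sum.elim_inr, Quotient.lift_mk] at h
        by_cases ha : a ∈ S <;> by_cases hb : b ∈ S
        · rw [if_neg (by simpa using ha), if_neg (by simpa using hb)] at h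
          obtain rfl : a = b := Sum.inr.inj h
          rfl
        · rw [if_neg (by simpa using ha), if_pos hb] at h; exact absurd h (by simp)
        · rw [if_pos ha, if_neg (by simpa using hb)] at h; exact absurd h (by simp)
        · rw [if_pos ha, if_pos hb] at h
          exact congrArg Sum.inr (Quotient.sound ((prod_sameCycle_off hA hB ha).1
            (Quotient.exact (Sum.inl.inj h))))
    · rintro (c | u)
      · induction c using Quotient.inductionOn with
        | _ w =>
        by_cases hw : w ∈ S
        · exact ⟨Sum.inl (Quotient.mk _ w), by simp only [hF, Sum.elim_inl,
            Quotient.lift_mk, if_pos hw]⟩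
        · exact ⟨Sum.inr (Quotient.mk _ w), by simp only [hF, Sum.elim_inr,
            Quotient.lift_mk, if_pos hw]⟩
      · by_cases hu : u ∈ S
        · refine ⟨Sum.inr (Quotient.mk _ u), ?_⟩
          simp only [hF, Sum.elim_inr, Quotient.lift_mk]
          rw [if_neg (by simpa using hu)]
        · refine ⟨Sum.inl (Quotient.mk _ u), ?_⟩
          simp only [hF, Sum.elim_inl, Quotient.lift_mk]
          rw [if_neg hu]
  have hcard := Nat.card_eq_of_bijective F hbij
  rw [Nat.card_sum, Nat.card_sum] at hcard
  unfold numOrbits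
  omega

end DisjointProd
end TransferStuff

section TauStuff
variable (p q : ℕ)

lemma tau_apply_inl (i : Fin p) :
    tauPQ p q (finSumFinEquiv (Sum.inl i)) = finSumFinEquiv (Sum.inl (finRotate p i)) := by
  simp [tauPQ, Equiv.permCongr_apply]

lemma tau_apply_inr (j : Fin q) :
    tauPQ p q (finSumFinEquiv (Sum.inr j)) = finSumFinEquiv (Sum.inr (finRotate q j)) := by
  simp [tauPQ, Equiv.permCongr_apply]

lemma tau_pow_inl (k : ℕ) (i : Fin p) :
    ((tauPQ p q) ^ k) (finSumFinEquiv (Sum.inl i)) =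
      finSumFinEquiv (Sum.inl (((finRotate p) ^ k) i)) := by
  induction k with
  | zero => rfl
  | succ k ih => rw [pow_succ_apply, ih, tau_apply_inl, pow_succ_apply]

lemma tau_pow_inr (k : ℕ) (j : Fin q) :
    ((tauPQ p q) ^ k) (finSumFinEquiv (Sum.inr j)) =
      finSumFinEquiv (Sum.inr (((finRotate q) ^ k) j)) := by
  induction k with
  | zero => rfl
  | succ k ih => rw [pow_succ_apply, ih, tau_apply_inr, pow_succ_apply]

lemma coe_inl (i : Fin p) : ((finSumFinEquiv (Sum.inl i) : Fin (p+q)) : ℕ) = (i : ℕ) := by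
  rw [finSumFinEquiv_apply_left, Fin.coe_castAdd]

lemma coe_inr (j : Fin q) : ((finSumFinEquiv (Sum.inr j) : Fin (p+q)) : ℕ) = p + (j : ℕ) := by
  rw [finSumFinEquiv_apply_right, Fin.coe_natAdd]

lemma fin_cases' (x : Fin (p+q)) :
    (∃ i : Fin p, x = finSumFinEquiv (Sum.inl i)) ∨
      (∃ j : Fin q, x = finSumFinEquiv (Sum.inr j)) := by
  rcases h : finSumFinEquiv.symm x with i | j
  · exact Or.inl ⟨i, by rw [← h, Equiv.apply_symm_apply]⟩
  · exact Or.inr ⟨j, by rw [← h, Equiv.apply_symm_apply]⟩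

open Fin.NatCast in
lemma finRotate_sameCycle {m : ℕ} (i i' : Fin m) : ∃ k : ℕ, ((finRotate m) ^ k) i = i' := by
  match m with
  | 0 => exact i.elim0
  | Nat.succ n =>
      have aux : ∀ (k : ℕ) (i : Fin (n+1)), ((finRotate (n+1)) ^ k) i = i + (k : Fin (n+1)) := by
        intro k
        induction k with
        | zero => intro i; simp
        | succ k ih =>
            intro i
            rw [pow_succ_apply, ih, finRotate_succ_apply]
            push_cast
            rw [add_assoc]
      refine ⟨(i' - i : Fin (n+1)).val, ?_⟩
      rw [aux, Fin.cast_val_eq_self, add_comm, sub_add_cancel]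

lemma tau_sameCycle_iff (x y : Fin (p+q)) :
    (tauPQ p q).SameCycle x y ↔ (((x : ℕ) < p) ↔ ((y : ℕ) < p)) := by
  constructor
  · intro h
    obtain ⟨k, hk⟩ := exists_pow_of_sameCycle h
    rcases fin_cases' p q x with ⟨i, rfl⟩ | ⟨j, rfl⟩
    · rw [tau_pow_inl] at hk
      rw [← hk, coe_inl, coe_inl]
      simp [i.isLt, (((finRotate p) ^ k) i).isLt]
    · rw [tau_pow_inr] at hk
      rw [← hk, coe_inr, coe_inr]
      simp
  · intro h
    rcases fin_cases' p q x with ⟨i, rfl⟩ | ⟨j, rfl⟩ <;>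
      rcases fin_cases' p q y with ⟨i', rfl⟩ | ⟨j', rfl⟩
    · obtain ⟨k, hk⟩ := finRotate_sameCycle i i'
      exact sameCycle_of_pow ((tau_pow_inl p q k i).trans (by rw [hk]))
    · rw [coe_inl, coe_inr] at h
      exact absurd (h.1 i.isLt) (by omega)
    · rw [coe_inl, coe_inr] at h
      exact absurd (h.2 i'.isLt) (by omega)
    · obtain ⟨k, hk⟩ := finRotate_sameCycle j j'
      exact sameCycle_of_pow ((tau_pow_inr p q k j).trans (by rw [hk]))

lemma numOrbits_tau (hp : 1 ≤ p) (hq : 1 ≤ q) : numOrbits (tauPQ p q) = 2 := by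
  classical
  have wd : ∀ (a b : Fin (p+q)), orbitSetoid (tauPQ p q) a b →
      decide ((a : ℕ) < p) = decide ((b : ℕ) < p) := by
    intro a b hab
    have := (tau_sameCycle_iff p q a b).1 hab
    by_cases hb : (b : ℕ) < p
    · simp [hb, this.2 hb]
    · have ha : ¬ (a:ℕ) < p := fun ha => hb (this.1 ha)
      simp [hb, ha]
  have hbij : Function.Bijective (Quotient.lift (fun a : Fin (p+q) =>
      decide ((a : ℕ) < p)) wd) := by
    constructor
    · intro c1 c2 h
      revert h
      refine Quotient.inductionOn₂ c1 c2 fun a b h => ?_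
      simp only [Quotient.lift_mk] at h
      refine Quotient.sound ((tau_sameCycle_iff p q a b).2 ?_)
      constructor
      · intro ha
        have : decide ((a:ℕ) < p) = true := by simpa using ha
        rw [h] at this; simpa using this
      · intro hb
        have : decide ((b:ℕ) < p) = true := by simpa using hb
        rw [← h] at this; simpa using this
    · intro s
      rcases Bool.eq_false_or_eq_true s with rfl | rfl
      · refine ⟨Quotient.mk _ (⟨0, by omega⟩ : Fin (p+q)), ?_⟩
        rw [Quotient.lift_mk]
        exact decide_eq_true hp
      · refine ⟨Quotient.mk _ (⟨p, by omega⟩ : Fin (p+q)), ?_⟩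
        rw [Quotient.lift_mk]
        exact decide_eq_false (Nat.lt_irrefl p)
  have := Nat.card_eq_of_bijective _ hbij
  unfold numOrbits
  rw [this]
  simp [Nat.card_eq_fintype_card]

end TauStuff

section CardLemmas
variable {α : Type*} [DecidableEq α] [Fintype α]

lemma card_quot_all_rel {r : Setoid α} [Nonempty α] (h : ∀ a b, r a b) :
    Nat.card (Quotient r) = 1 := by
  rw [Nat.card_eq_one_iff_unique]
  refine ⟨⟨fun c1 c2 => Quotient.inductionOn₂ c1 c2 fun a b => Quotient.sound (h a b)⟩, ?_⟩
  exact ⟨Quotient.mk r Classical.ofNonempty⟩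

lemma card_quot_one_class {r : Setoid α} {P : α → Prop}
    (hrel : ∀ a b, r a b ↔ ((P a ∧ P b) ∨ a = b)) (hP : ∃ a, P a) :
    Nat.card (Quotient r) = 1 + Nat.card ↥{x | ¬ P x} := by
  classical
  have wd : ∀ a b, r a b →
      (if h : P a then (Sum.inl () : Unit ⊕ ↥{x | ¬ P x}) else Sum.inr ⟨a, h⟩) =
      (if h : P b then Sum.inl () else Sum.inr ⟨b, h⟩) := by
    intro a b hab
    rcases (hrel a b).1 hab with ⟨ha, hb⟩ | rfl
    · rw [dif_pos ha, dif_pos hb]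
    · rfl
  have hbij : Function.Bijective (fun c : Quotient r => Quotient.lift _ wd c) := by
    constructor
    · intro c1 c2 h
      revert h
      refine Quotient.inductionOn₂ c1 c2 fun a b h => ?_
      simp only [Quotient.lift_mk] at h
      by_cases ha : P a <;> by_cases hb : P b
      · exact Quotient.sound ((hrel a b).2 (Or.inl ⟨ha, hb⟩))
      · rw [dif_pos ha, dif_neg hb] at h; exact absurd h (by simp)
      · rw [dif_neg ha, dif_pos hb] at h; exact absurd h (by simp)
      · rw [dif_neg ha, dif_neg hb] at h
        obtain rfl : a = b := congrArg Subtype.val (Sum.inr.inj h)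
        rfl
    · rintro (⟨⟩ | ⟨x, hx⟩)
      · obtain ⟨a, ha⟩ := hP
        exact ⟨Quotient.mk r a, by simp only [Quotient.lift_mk]; rw [dif_pos ha]⟩
      · exact ⟨Quotient.mk r x, by simp only [Quotient.lift_mk]; rw [dif_neg hx]⟩
  have := Nat.card_eq_of_bijective _ hbij
  rw [this, Nat.card_sum]
  simp

lemma card_quot_two_class {r : Setoid α} {P Q : α → Prop}
    (hrel : ∀ a b, r a b ↔ ((P a ∧ P b) ∨ (Q a ∧ Q b) ∨ a = b))
    (hPQ : ∀ a, ¬ (P a ∧ Q a)) (hP : ∃ a, P a) (hQ : ∃ a, Q a) :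
    Nat.card (Quotient r) = 2 + Nat.card ↥{x | ¬ P x ∧ ¬ Q x} := by
  classical
  have wd : ∀ a b, r a b →
      (if h1 : P a then (Sum.inl true : Bool ⊕ ↥{x | ¬ P x ∧ ¬ Q x})
        else if h2 : Q a then Sum.inl false else Sum.inr ⟨a, ⟨h1, h2⟩⟩) =
      (if h1 : P b then Sum.inl true
        else if h2 : Q b then Sum.inl false else Sum.inr ⟨b, ⟨h1, h2⟩⟩) := by
    intro a b hab
    rcases (hrel a b).1 hab with ⟨ha, hb⟩ | ⟨ha, hb⟩ | rfl
    · rw [dif_pos ha, dif_pos hb]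
    · rw [dif_neg (fun h => hPQ a ⟨h, ha⟩), dif_neg (fun h => hPQ b ⟨h, hb⟩),
        dif_pos ha, dif_pos hb]
    · rfl
  have hbij : Function.Bijective (fun c : Quotient r => Quotient.lift _ wd c) := by
    constructor
    · intro c1 c2 h
      revert h
      refine Quotient.inductionOn₂ c1 c2 fun a b h => ?_
      simp only [Quotient.lift_mk] at h
      by_cases ha : P a <;> by_cases hb : P b
      · exact Quotient.sound ((hrel a b).2 (Or.inl ⟨ha, hb⟩))
      · rw [dif_pos ha, dif_neg hb] at h
        by_cases hb2 : Q b
        · rw [dif_pos hb2] at h; exact absurd h (by simp)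
        · rw [dif_neg hb2] at h; exact absurd h (by simp)
      · rw [dif_neg ha, dif_pos hb] at h
        by_cases ha2 : Q a
        · rw [dif_pos ha2] at h; exact absurd h (by simp)
        · rw [dif_neg ha2] at h; exact absurd h (by simp)
      · rw [dif_neg ha, dif_neg hb] at h
        by_cases ha2 : Q a <;> by_cases hb2 : Q b
        · exact Quotient.sound ((hrel a b).2 (Or.inr (Or.inl ⟨ha2, hb2⟩)))
        · rw [dif_pos ha2, dif_neg hb2] at h; exact absurd h (by simp)
        · rw [dif_neg ha2, dif_pos hb2] at h; exact absurd h (by simp)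
        · rw [dif_neg ha2, dif_neg hb2] at h
          obtain rfl : a = b := congrArg Subtype.val (Sum.inr.inj h)
          rfl
    · rintro (b | ⟨x, hx1, hx2⟩)
      · rcases Bool.eq_false_or_eq_true b with rfl | rfl
        · obtain ⟨a, ha⟩ := hP
          exact ⟨Quotient.mk r a, by simp only [Quotient.lift_mk]; rw [dif_pos ha]⟩
        · obtain ⟨a, ha⟩ := hQ
          refine ⟨Quotient.mk r a, ?_⟩
          simp only [Quotient.lift_mk]
          rw [dif_neg (fun h => hPQ a ⟨h, ha⟩), dif_pos ha]
      · refine ⟨Quotient.mk r x, ?_⟩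
        simp only [Quotient.lift_mk]
        rw [dif_neg hx1, dif_neg hx2]
  have := Nat.card_eq_of_bijective _ hbij
  rw [this, Nat.card_sum]
  simp [Nat.card_eq_fintype_card]

end CardLemmas



end AnnNC

open AnnNC in
/-- gluing an annular noncrossing permutation `σ₁` on the union `J` of two
cycles of `ρ` (one in each circle) with a disc-noncrossing permutation `σ₂` below `ρ` on the
complement of `J` produces an element `σ₁σ₂` of `S_ann-nc(p,q)`.  Here `σ₁` and `σ₂` are
realised as permutations of `Fin (p+q)` fixing the complement of their set pointwise, and
`ρJ`, `ρJc` are the restrictions of `ρ` to `J` and its complement. -/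
theorem stmt4 (p q : ℕ) (hp : 1 ≤ p) (hq : 1 ≤ q)
    (ρ : Equiv.Perm (Fin (p + q))) (hρ : ρ ∈ SDiscNC p q)
    (u v : Fin (p + q)) (hu : (u : ℕ) < p) (hv : p ≤ (v : ℕ))
    (J : Set (Fin (p + q))) (hJ : J = {x | ρ.SameCycle u x ∨ ρ.SameCycle v x})
    (ρJ ρJc : Equiv.Perm (Fin (p + q)))
    (hρJ : ∀ x ∈ J, ρJ x = ρ x) (hρJ' : ∀ x ∉ J, ρJ x = x)
    (hρJc : ∀ x ∉ J, ρJc x = ρ x) (hρJc' : ∀ x ∈ J, ρJc x = x)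
    (σ₁ σ₂ : Equiv.Perm (Fin (p + q)))
    (hσ₁fix : ∀ x ∉ J, σ₁ x = x) (hσ₂fix : ∀ x ∈ J, σ₂ x = x)
    (hσ₁nc : IsNoncrossingWithin J σ₁ ρJ)
    (hσ₁br : ∃ a b : Fin (p + q), σ₁.SameCycle a b ∧ ρ.SameCycle u a ∧ ρ.SameCycle v b)
    (hσ₂nc : IsNoncrossingWithin Jᶜ σ₂ ρJc)
    (hσ₂ref : ∀ x y : Fin (p + q), σ₂.SameCycle x y → ρ.SameCycle x y) :
    σ₁ * σ₂ ∈ SAnnNC p q := by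
  classical
  have hside := hρ.2
  have hJu : u ∈ J := by rw [hJ]; exact Or.inl (Equiv.Perm.SameCycle.refl ρ u)
  have hJv : v ∈ J := by rw [hJ]; exact Or.inr (Equiv.Perm.SameCycle.refl ρ v)
  have huv : ¬ ρ.SameCycle u v := by
    intro h
    have := (hside u v h).1 hu
    omega
  have hJclosed : ∀ x ∈ J, ∀ y, ρ.SameCycle x y → y ∈ J := by
    intro x hx y hxy
    rw [hJ] at hx ⊢
    rcases hx with h | h
    · exact Or.inl (h.trans hxy)
    · exact Or.inr (h.trans hxy)
  have hJinv : ∀ x ∈ J, ρ x ∈ J := fun x hx => hJclosed x hx _ (sameCycle_apply_self ρ x)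
  have hJcinv : ∀ x ∉ J, ρ x ∉ J := by
    intro x hx hρx
    exact hx (hJclosed _ hρx x (sameCycle_apply_self ρ x).symm)
  have hσ₁J : ∀ x ∈ J, σ₁ x ∈ J := mapsTo_of_fixes_compl hσ₁fix
  have hρJmaps : ∀ x ∈ J, ρJ x ∈ J := fun x hx => by rw [hρJ x hx]; exact hJinv x hx
  have hσ₁invJ : ∀ w ∈ J, σ₁⁻¹ w ∈ J :=
    mapsTo_of_fixes_compl (fun x hx => inv_fixes (hσ₁fix x hx))
  have hσ₂invJc : ∀ w ∉ J, σ₂⁻¹ w ∉ J :=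
    mapsTo_compl_of_fixes (fun x hx => inv_fixes (hσ₂fix x hx))
  have tr1 : ∀ x ∈ J, ∀ y, ρ.SameCycle x y → ρJ.SameCycle x y := fun x hx y h =>
    sameCycle_congr_on (T := J) hJinv (fun z hz => (hρJ z hz).symm) hx h
  have tr2 : ∀ x ∈ J, ∀ y, ρJ.SameCycle x y → ρ.SameCycle x y := fun x hx y h =>
    sameCycle_congr_on (T := J) hρJmaps (fun z hz => hρJ z hz) hx h
  have tr3 : ∀ x ∉ J, ∀ y, ρ.SameCycle x y → ρJc.SameCycle x y := fun x hx y h =>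
    sameCycle_congr_on (T := {z | z ∉ J}) hJcinv (fun z hz => (hρJc z hz).symm) hx h
  -- the bridge
  obtain ⟨a, b, hab, hua, hvb⟩ := hσ₁br
  have haJ : a ∈ J := by rw [hJ]; exact Or.inl hua
  have hbJ : b ∈ J := by rw [hJ]; exact Or.inr hvb
  have hap : (a : ℕ) < p := (hside u a hua).1 hu
  have hbp : p ≤ (b : ℕ) := by
    have := hside v b hvb
    omega
  have hσab : (σ₁ * σ₂).SameCycle a b := (prod_sameCycle_on hσ₁fix hσ₂fix haJ).2 hab
  -- numJoin (σ₁σ₂) τ = 1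
  haveI : Nonempty (Fin (p+q)) := ⟨u⟩
  have hστJ : numJoin (σ₁ * σ₂) (tauPQ p q) = 1 := by
    refine card_quot_all_rel ?_
    have key : ∀ x : Fin (p+q),
        (orbitSetoid (σ₁*σ₂) ⊔ orbitSetoid (tauPQ p q)) x a := by
      intro x
      by_cases hx : (x : ℕ) < p
      · exact Setoid.le_def.1 le_sup_right
          ((tau_sameCycle_iff p q x a).2 (iff_of_true hx hap))
      · have h1 : (orbitSetoid (σ₁*σ₂) ⊔ orbitSetoid (tauPQ p q)) x b :=
          Setoid.le_def.1 le_sup_right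
            ((tau_sameCycle_iff p q x b).2 (iff_of_false hx (by omega)))
        have h2 : (orbitSetoid (σ₁*σ₂) ⊔ orbitSetoid (tauPQ p q)) b a :=
          Setoid.le_def.1 le_sup_left hσab.symm
        exact (orbitSetoid (σ₁*σ₂) ⊔ orbitSetoid (tauPQ p q)).trans h1 h2
    intro x y
    exact (orbitSetoid (σ₁*σ₂) ⊔ orbitSetoid (tauPQ p q)).trans (key x)
      ((orbitSetoid (σ₁*σ₂) ⊔ orbitSetoid (tauPQ p q)).symm (key y))
  -- numOrbits ρJ = 2 + |Jᶜ|
  have hJcset : {x : Fin (p+q) | ¬ ρ.SameCycle u x ∧ ¬ ρ.SameCycle v x} = Jᶜ := by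
    ext x
    simp only [Set.mem_setOf_eq, Set.mem_compl_iff, hJ, not_or]
  have cρJ : numOrbits ρJ = 2 + Nat.card ↥(Jᶜ) := by
    rw [← hJcset]
    refine card_quot_two_class ?_ ?_ ⟨u, Equiv.Perm.SameCycle.refl ρ u⟩
      ⟨v, Equiv.Perm.SameCycle.refl ρ v⟩
    · intro x y
      constructor
      · intro h
        by_cases hxJ : x ∈ J
        · have hρxy := tr2 x hxJ y h
          rw [hJ] at hxJ
          rcases hxJ with h1 | h1
          · exact Or.inl ⟨h1, h1.trans hρxy⟩
          · exact Or.inr (Or.inl ⟨h1, h1.trans hρxy⟩)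
        · exact Or.inr (Or.inr (sameCycle_eq_of_fixed (hρJ' x hxJ) h).symm)
      · rintro (⟨h1, h2⟩ | ⟨h1, h2⟩ | rfl)
        · exact tr1 x (by rw [hJ]; exact Or.inl h1) y (h1.symm.trans h2)
        · exact tr1 x (by rw [hJ]; exact Or.inr h1) y (h1.symm.trans h2)
        · exact Equiv.Perm.SameCycle.refl ρJ x
    · rintro x ⟨h1, h2⟩
      exact huv (h1.trans h2.symm)
  -- numJoin σ₁ ρJ = 1 + |Jᶜ|
  have hJcset2 : {x : Fin (p+q) | ¬ x ∈ J} = Jᶜ := by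
    ext x; simp
  have cJoin1 : numJoin σ₁ ρJ = 1 + Nat.card ↥(Jᶜ) := by
    let sJ : Setoid (Fin (p+q)) := ⟨fun a b => (a ∈ J ∧ b ∈ J) ∨ a = b, by
      refine ⟨fun a => Or.inr rfl, ?_, ?_⟩
      · rintro x y (⟨h1, h2⟩ | rfl)
        · exact Or.inl ⟨h2, h1⟩
        · exact Or.inr rfl
      · rintro x y z (⟨h1, h2⟩ | rfl) (⟨h3, h4⟩ | rfl)
        · exact Or.inl ⟨h1, h4⟩
        · exact Or.inl ⟨h1, h2⟩
        · exact Or.inl ⟨h3, h4⟩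
        · exact Or.inr rfl⟩
    have hle : orbitSetoid σ₁ ⊔ orbitSetoid ρJ ≤ sJ := by
      apply sup_le
      · rw [Setoid.le_def]
        intro x y hxy
        by_cases hx : x ∈ J
        · exact Or.inl ⟨hx, sameCycle_mem_of_inv hσ₁J hx hxy⟩
        · exact Or.inr (sameCycle_eq_of_fixed (hσ₁fix x hx) hxy).symm
      · rw [Setoid.le_def]
        intro x y hxy
        by_cases hx : x ∈ J
        · exact Or.inl ⟨hx, sameCycle_mem_of_inv hρJmaps hx hxy⟩
        · exact Or.inr (sameCycle_eq_of_fixed (hρJ' x hx) hxy).symm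
    have juv : (orbitSetoid σ₁ ⊔ orbitSetoid ρJ) u v := by
      have j1 : (orbitSetoid σ₁ ⊔ orbitSetoid ρJ) u a :=
        Setoid.le_def.1 le_sup_right (tr1 u hJu a hua)
      have j2 : (orbitSetoid σ₁ ⊔ orbitSetoid ρJ) a b :=
        Setoid.le_def.1 le_sup_left hab
      have j3 : (orbitSetoid σ₁ ⊔ orbitSetoid ρJ) v b :=
        Setoid.le_def.1 le_sup_right (tr1 v hJv b hvb)
      exact (orbitSetoid σ₁ ⊔ orbitSetoid ρJ).trans j1
        ((orbitSetoid σ₁ ⊔ orbitSetoid ρJ).trans j2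
          ((orbitSetoid σ₁ ⊔ orbitSetoid ρJ).symm j3))
    have keyJ : ∀ z ∈ J, (orbitSetoid σ₁ ⊔ orbitSetoid ρJ) u z := by
      intro z hz
      rw [hJ] at hz
      rcases hz with h | h
      · exact Setoid.le_def.1 le_sup_right (tr1 u hJu z h)
      · exact (orbitSetoid σ₁ ⊔ orbitSetoid ρJ).trans juv
          (Setoid.le_def.1 le_sup_right (tr1 v hJv z h))
    have hrel : ∀ x y : Fin (p+q), (orbitSetoid σ₁ ⊔ orbitSetoid ρJ) x y ↔
        ((x ∈ J ∧ y ∈ J) ∨ x = y) := by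
      intro x y
      constructor
      · intro h
        exact Setoid.le_def.1 hle h
      · rintro (⟨hxJ, hyJ⟩ | rfl)
        · exact (orbitSetoid σ₁ ⊔ orbitSetoid ρJ).trans
            ((orbitSetoid σ₁ ⊔ orbitSetoid ρJ).symm (keyJ x hxJ)) (keyJ y hyJ)
        · exact (orbitSetoid σ₁ ⊔ orbitSetoid ρJ).refl x
    rw [← hJcset2]
    exact card_quot_one_class hrel ⟨u, hJu⟩
  -- numJoin σ₂ ρJc = numOrbits ρJc
  have cJoin2 : numJoin σ₂ ρJc = numOrbits ρJc := by
    unfold numJoin numOrbits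
    have hle : orbitSetoid σ₂ ≤ orbitSetoid ρJc := by
      rw [Setoid.le_def]
      intro x y hxy
      by_cases hx : x ∈ J
      · have := sameCycle_eq_of_fixed (hσ₂fix x hx) hxy
        subst this
        exact Equiv.Perm.SameCycle.refl ρJc _
      · exact tr3 x hx y (hσ₂ref x y hxy)
    rw [sup_eq_right.2 hle]
  -- numJoin ρ τ = 2
  have hτ2 : numOrbits (tauPQ p q) = 2 := numOrbits_tau p q hp hq
  have cJoinρτ : numJoin ρ (tauPQ p q) = 2 := by
    have hle : orbitSetoid ρ ≤ orbitSetoid (tauPQ p q) := by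
      rw [Setoid.le_def]
      intro x y hxy
      exact (tau_sameCycle_iff p q x y).2 (hside x y hxy)
    unfold numJoin
    rw [sup_eq_right.2 hle]
    exact hτ2
  have hinvJ : numJoin (σ₁*σ₂)⁻¹ (tauPQ p q) = 1 := by
    unfold numJoin at hστJ ⊢
    rw [orbitSetoid_inv]
    exact hστJ
  -- product decompositions
  have Pe1 : ρJ * ρJc = ρ := by
    apply Equiv.ext
    intro x
    rw [Equiv.Perm.mul_apply]
    by_cases hx : x ∈ J
    · rw [hρJc' x hx, hρJ x hx]
    · rw [hρJc x hx, hρJ' _ (hJcinv x hx)]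
  have Pe2 : (σ₁*σ₂)⁻¹ * ρ = (σ₁⁻¹ * ρJ) * (σ₂⁻¹ * ρJc) := by
    apply Equiv.ext
    intro x
    rw [mul_inv_rev]
    simp only [Equiv.Perm.mul_apply]
    by_cases hx : x ∈ J
    · rw [hρJc' x hx, inv_fixes (hσ₂fix x hx), hρJ x hx]
      exact inv_fixes (hσ₂fix _ (hσ₁invJ _ (hJinv x hx)))
    · have h1 : ρ x ∉ J := hJcinv x hx
      have h2 : σ₂⁻¹ (ρ x) ∉ J := hσ₂invJc _ h1
      rw [hρJc x hx, hρJ' _ h2, inv_fixes (hσ₁fix _ h2), inv_fixes (hσ₁fix _ h1)]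
  have Pe3 : ((σ₁*σ₂)⁻¹ * ρ) * (ρ⁻¹ * tauPQ p q) = (σ₁*σ₂)⁻¹ * tauPQ p q := by
    group
  -- counting equations
  have Ce1 : numOrbits (σ₁*σ₂) + Nat.card (Fin (p+q)) = numOrbits σ₁ + numOrbits σ₂ :=
    numOrbits_disjoint_prod hσ₁fix hσ₂fix
  have Ce2 : numOrbits ((σ₁*σ₂)⁻¹ * ρ) + Nat.card (Fin (p+q)) =
      numOrbits (σ₁⁻¹ * ρJ) + numOrbits (σ₂⁻¹ * ρJc) := by
    rw [Pe2]
    exact numOrbits_disjoint_prod (S := J)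
      (fun x hx => by rw [Equiv.Perm.mul_apply, hρJ' x hx, inv_fixes (hσ₁fix x hx)])
      (fun x hx => by rw [Equiv.Perm.mul_apply, hρJc' x hx, inv_fixes (hσ₂fix x hx)])
  have Ce3 : numOrbits ρ + Nat.card (Fin (p+q)) = numOrbits ρJ + numOrbits ρJc := by
    rw [← Pe1]
    exact numOrbits_disjoint_prod (S := J) hρJ' hρJc'
  have G1 : numOrbits ((σ₁*σ₂)⁻¹ * ρ) + numOrbits (ρ⁻¹ * tauPQ p q) ≤
      numOrbits ((σ₁*σ₂)⁻¹ * tauPQ p q) + Nat.card (Fin (p+q)) := by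
    have := numOrbits_mul_ge ((σ₁*σ₂)⁻¹ * ρ) (ρ⁻¹ * tauPQ p q)
    rwa [Pe3] at this
  have G2 : numOrbits ((σ₁*σ₂)⁻¹) + numOrbits (tauPQ p q) +
      numOrbits ((σ₁*σ₂)⁻¹ * tauPQ p q) ≤ Nat.card (Fin (p+q)) + 2 * 1 := by
    have h := genus_pair ((σ₁*σ₂)⁻¹) (tauPQ p q)
    rwa [hinvJ] at h
  have hσinv : numOrbits ((σ₁*σ₂)⁻¹) = numOrbits (σ₁*σ₂) := numOrbits_inv _
  have hcompl : Nat.card ↥J + Nat.card ↥(Jᶜ) = Nat.card (Fin (p+q)) := by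
    rw [Nat.card_coe_set_eq, Nat.card_coe_set_eq, Set.ncard_add_ncard_compl]
  have hJcc : Nat.card ↥((Jᶜ)ᶜ : Set (Fin (p+q))) = Nat.card ↥J := by
    rw [compl_compl]
  -- the noncrossing equations from the hypotheses
  have E9 : (numOrbits (tauPQ p q) : ℤ) + (numOrbits ρ : ℤ) +
      (numOrbits (ρ⁻¹ * tauPQ p q) : ℤ) - (Nat.card (Fin (p+q)) : ℤ) =
      2 * (numJoin ρ (tauPQ p q) : ℤ) := hρ.1
  have E3 : ((numOrbits ρJ : ℤ) - (Nat.card ↥(Jᶜ) : ℤ)) +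
      ((numOrbits σ₁ : ℤ) - (Nat.card ↥(Jᶜ) : ℤ)) +
      ((numOrbits (σ₁⁻¹ * ρJ) : ℤ) - (Nat.card ↥(Jᶜ) : ℤ)) - (Nat.card ↥J : ℤ) =
      2 * ((numJoin σ₁ ρJ : ℤ) - (Nat.card ↥(Jᶜ) : ℤ)) := hσ₁nc
  have E5 : ((numOrbits ρJc : ℤ) - (Nat.card ↥((Jᶜ)ᶜ : Set (Fin (p+q))) : ℤ)) +
      ((numOrbits σ₂ : ℤ) - (Nat.card ↥((Jᶜ)ᶜ : Set (Fin (p+q))) : ℤ)) +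
      ((numOrbits (σ₂⁻¹ * ρJc) : ℤ) - (Nat.card ↥((Jᶜ)ᶜ : Set (Fin (p+q))) : ℤ)) -
      (Nat.card ↥(Jᶜ) : ℤ) =
      2 * ((numJoin σ₂ ρJc : ℤ) - (Nat.card ↥((Jᶜ)ᶜ : Set (Fin (p+q))) : ℤ)) := hσ₂nc
  -- final assembly
  refine ⟨?_, a, b, hσab, hap, hbp⟩
  show (numOrbits (tauPQ p q) : ℤ) + (numOrbits (σ₁*σ₂) : ℤ) +
      (numOrbits ((σ₁*σ₂)⁻¹ * tauPQ p q) : ℤ) - (Nat.card (Fin (p+q)) : ℤ) =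
      2 * (numJoin (σ₁*σ₂) (tauPQ p q) : ℤ)
  rw [hJcc] at E5
  have cρJ' : (numOrbits ρJ : ℤ) = 2 + (Nat.card ↥(Jᶜ) : ℤ) := by exact_mod_cast cρJ
  have cJoin1' : (numJoin σ₁ ρJ : ℤ) = 1 + (Nat.card ↥(Jᶜ) : ℤ) := by exact_mod_cast cJoin1
  have cJoin2' : (numJoin σ₂ ρJc : ℤ) = (numOrbits ρJc : ℤ) := by exact_mod_cast cJoin2
  have cJoinρτ' : (numJoin ρ (tauPQ p q) : ℤ) = 2 := by exact_mod_cast cJoinρτ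
  have hστJ' : (numJoin (σ₁*σ₂) (tauPQ p q) : ℤ) = 1 := by exact_mod_cast hστJ
  have hτ2' : (numOrbits (tauPQ p q) : ℤ) = 2 := by exact_mod_cast hτ2
  have Ce1' : (numOrbits (σ₁*σ₂) : ℤ) + (Nat.card (Fin (p+q)) : ℤ) =
      (numOrbits σ₁ : ℤ) + (numOrbits σ₂ : ℤ) := by exact_mod_cast Ce1
  have Ce2' : (numOrbits ((σ₁*σ₂)⁻¹ * ρ) : ℤ) + (Nat.card (Fin (p+q)) : ℤ) =
      (numOrbits (σ₁⁻¹ * ρJ) : ℤ) + (numOrbits (σ₂⁻¹ * ρJc) : ℤ) := by exact_mod_cast Ce2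
  have Ce3' : (numOrbits ρ : ℤ) + (Nat.card (Fin (p+q)) : ℤ) =
      (numOrbits ρJ : ℤ) + (numOrbits ρJc : ℤ) := by exact_mod_cast Ce3
  have G1' : (numOrbits ((σ₁*σ₂)⁻¹ * ρ) : ℤ) + (numOrbits (ρ⁻¹ * tauPQ p q) : ℤ) ≤
      (numOrbits ((σ₁*σ₂)⁻¹ * tauPQ p q) : ℤ) + (Nat.card (Fin (p+q)) : ℤ) := by
    exact_mod_cast G1
  have G2' : (numOrbits ((σ₁*σ₂)⁻¹) : ℤ) + (numOrbits (tauPQ p q) : ℤ) +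
      (numOrbits ((σ₁*σ₂)⁻¹ * tauPQ p q) : ℤ) ≤ (Nat.card (Fin (p+q)) : ℤ) + 2 := by
    exact_mod_cast G2
  have hσinv' : (numOrbits ((σ₁*σ₂)⁻¹) : ℤ) = (numOrbits (σ₁*σ₂) : ℤ) := by
    exact_mod_cast hσinv
  have hcompl' : (Nat.card ↥J : ℤ) + (Nat.card ↥(Jᶜ) : ℤ) = (Nat.card (Fin (p+q)) : ℤ) := by
    exact_mod_cast hcompl
  rw [hστJ', hτ2']
  linarith
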